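/- Let k be a commutative ring and H a bialgebra over k with comultiplication Δ and counit ε. Let x be an invertible element of the algebra H ⊗_k H satisfying the cocycle condition (1 ⊗ x) · ((id_H ⊗ Δ)(x)) = (x ⊗ 1) · ((Δ ⊗ id_H)(x)) in H ⊗ H ⊗ H (after identifying the two bracketings by the associativity isomorphism), together with the normalization (ε ⊗ id)(x) = 1 and (id ⊗ ε)(x) = 1. Then H, with its original algebra structure, the twisted comultiplication Δ^x(h) = x · Δ(h) · x^{-1}, and the original counit ε, is again a bialgebra; in particular Δ^x is coassociative, counital with counit ε, and is an algebra homomorphism. -/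

import Mathlib

open TensorProduct

noncomputable section

variable (k : Type u) (H : Type v) [CommRing k] [Ring H] [Bialgebra k H]

/-- The twisted comultiplication `Δˣ(h) = x · Δ(h) · x⁻¹`, as a `k`-linear map. -/
def twistedComul (x : (H ⊗[k] H)ˣ) : H →ₗ[k] H ⊗[k] H :=
  LinearMap.mulLeft k (x : H ⊗[k] H)
    ∘ₗ LinearMap.mulRight k ((x⁻¹ : (H ⊗[k] H)ˣ) : H ⊗[k] H)
    ∘ₗ Coalgebra.comul

lemma twistedComul_apply (x : (H ⊗[k] H)ˣ) (h : H) :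
    twistedComul k H x h = (x : H ⊗[k] H) * Coalgebra.comul h * ((x⁻¹ : (H ⊗[k] H)ˣ) : H ⊗[k] H) := by
  simp [twistedComul, mul_assoc]

lemma rTensor_algHom {A : Type*} {B : Type*} {C : Type*} [Ring A] [Ring B] [Ring C]
    [Algebra k A] [Algebra k B] [Algebra k C] (f : A →ₐ[k] B) (y : A ⊗[k] C) :
    LinearMap.rTensor C f.toLinearMap y
      = Algebra.TensorProduct.map f (AlgHom.id k C) y := by
  have : LinearMap.rTensor C f.toLinearMap
      = (Algebra.TensorProduct.map f (AlgHom.id k C)).toLinearMap :=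
    TensorProduct.ext' fun a b => by simp
  exact LinearMap.congr_fun this y

lemma lTensor_algHom {A : Type*} {B : Type*} {C : Type*} [Ring A] [Ring B] [Ring C]
    [Algebra k A] [Algebra k B] [Algebra k C] (f : A →ₐ[k] B) (y : C ⊗[k] A) :
    LinearMap.lTensor C f.toLinearMap y
      = Algebra.TensorProduct.map (AlgHom.id k C) f y := by
  have : LinearMap.lTensor C f.toLinearMap
      = (Algebra.TensorProduct.map (AlgHom.id k C) f).toLinearMap :=
    TensorProduct.ext' fun a b => by simp
  exact LinearMap.congr_fun this y

/-- The twisted comultiplication as an algebra homomorphism. -/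
def twistAlgHom (x : (H ⊗[k] H)ˣ) : H →ₐ[k] H ⊗[k] H :=
  AlgHom.ofLinearMap (twistedComul k H x)
    (by simp [twistedComul_apply, x.mul_inv])
    (fun a b => by
      simp only [twistedComul_apply, Bialgebra.comul_mul, mul_assoc,
        Units.inv_mul_cancel_left])

lemma twistAlgHom_apply (x : (H ⊗[k] H)ˣ) (h : H) :
    twistAlgHom k H x h
      = (x : H ⊗[k] H) * Coalgebra.comul h * ((x⁻¹ : (H ⊗[k] H)ˣ) : H ⊗[k] H) :=
  twistedComul_apply k H x h

lemma twistAlgHom_toLinearMap (x : (H ⊗[k] H)ˣ) :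
    (twistAlgHom k H x).toLinearMap = twistedComul k H x := rfl

set_option maxHeartbeats 1000000 in
/-- twisting the comultiplication of a bialgebra by an invertible normalized
2-cocycle `x ∈ (H ⊗ H)ˣ` again yields a bialgebra `(H, Δˣ, ε)` with the original algebra
structure: `Δˣ` is coassociative, counital with counit `ε`, and an algebra homomorphism. -/
theorem bialgebra_twist_by_two_cocycle
    (x : (H ⊗[k] H)ˣ)
    (hcocycle :
      ((1 : H) ⊗ₜ[k] (x : H ⊗[k] H))
          * (Algebra.TensorProduct.map (AlgHom.id k H) (Bialgebra.comulAlgHom k H)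
              (x : H ⊗[k] H))
        = (Algebra.TensorProduct.assoc k k k H H H)
            (((x : H ⊗[k] H) ⊗ₜ[k] (1 : H))
              * (Algebra.TensorProduct.map (Bialgebra.comulAlgHom k H) (AlgHom.id k H)
                  (x : H ⊗[k] H))))
    (hnorm₁ :
      (TensorProduct.lid k H)
        (LinearMap.rTensor H (Bialgebra.counitAlgHom k H).toLinearMap (x : H ⊗[k] H)) = 1)
    (hnorm₂ :
      (TensorProduct.rid k H)
        (LinearMap.lTensor H (Bialgebra.counitAlgHom k H).toLinearMap (x : H ⊗[k] H)) = 1) :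
    -- `Δˣ` is coassociative
    (TensorProduct.assoc k H H H ∘ₗ (twistedComul k H x).rTensor H ∘ₗ twistedComul k H x
        = (twistedComul k H x).lTensor H ∘ₗ twistedComul k H x) ∧
    -- `Δˣ` is counital with counit the original `ε`
    ((Coalgebra.counit (R := k) (A := H)).rTensor H ∘ₗ twistedComul k H x
        = TensorProduct.mk k k H 1) ∧
    ((Coalgebra.counit (R := k) (A := H)).lTensor H ∘ₗ twistedComul k H x
        = (TensorProduct.mk k H k).flip 1) ∧
    -- `Δˣ` is a homomorphism of `k`-algebras
    (∃ f : H →ₐ[k] H ⊗[k] H, ⇑f = ⇑(twistedComul k H x)) := by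
  have hXX' : (x : H ⊗[k] H) * ((x⁻¹ : (H ⊗[k] H)ˣ) : H ⊗[k] H) = 1 := x.mul_inv
  have hX'X : ((x⁻¹ : (H ⊗[k] H)ˣ) : H ⊗[k] H) * (x : H ⊗[k] H) = 1 := x.inv_mul
  set f : H →ₐ[k] H ⊗[k] H := twistAlgHom k H x with hfdef
  have hf : ∀ h, f h = (x : H ⊗[k] H) * Coalgebra.comul h * ((x⁻¹ : (H ⊗[k] H)ˣ) : H ⊗[k] H) :=
    twistAlgHom_apply k H x
  have hftl : f.toLinearMap = twistedComul k H x := twistAlgHom_toLinearMap k H x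
  have hfc : ⇑f = ⇑(twistedComul k H x) := by
    funext h; rw [hf h, twistedComul_apply]
  set G := Algebra.TensorProduct.map (Bialgebra.comulAlgHom k H) (AlgHom.id k H) with hG
  set G' := Algebra.TensorProduct.map (AlgHom.id k H) (Bialgebra.comulAlgHom k H) with hG'
  set A := Algebra.TensorProduct.assoc k k k H H H with hA0
  have hA : ∀ y : (H ⊗[k] H) ⊗[k] H, A y = (TensorProduct.assoc k H H H) y := fun y => rfl
  refine ⟨?_, ?_, ?_, f, hfc⟩
  · -- coassociativity
    apply LinearMap.ext; intro h
    simp only [LinearMap.comp_apply, LinearEquiv.coe_coe]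
    set Ψ : (H ⊗[k] H) ⊗[k] H := ((x : H ⊗[k] H) ⊗ₜ[k] (1 : H)) * G ↑x with hΨ
    set Ψ' : (H ⊗[k] H) ⊗[k] H :=
      G ((x⁻¹ : (H ⊗[k] H)ˣ) : H ⊗[k] H) * (((x⁻¹ : (H ⊗[k] H)ˣ) : H ⊗[k] H) ⊗ₜ[k] (1 : H))
      with hΨ'
    set Φ : H ⊗[k] (H ⊗[k] H) := ((1 : H) ⊗ₜ[k] (x : H ⊗[k] H)) * G' ↑x with hΦ
    set Φ' : H ⊗[k] (H ⊗[k] H) :=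
      G' ((x⁻¹ : (H ⊗[k] H)ˣ) : H ⊗[k] H) * ((1 : H) ⊗ₜ[k] ((x⁻¹ : (H ⊗[k] H)ˣ) : H ⊗[k] H))
      with hΦ'
    have hΨΨ' : Ψ * Ψ' = 1 := by
      rw [hΨ, hΨ', mul_assoc, ← mul_assoc (G ↑x), ← map_mul, x.mul_inv, map_one, one_mul,
        Algebra.TensorProduct.tmul_mul_tmul, x.mul_inv, one_mul,
        ← Algebra.TensorProduct.one_def]
    have hΦΦ' : Φ * Φ' = 1 := by
      rw [hΦ, hΦ', mul_assoc, ← mul_assoc (G' ↑x), ← map_mul, x.mul_inv, map_one, one_mul,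
        Algebra.TensorProduct.tmul_mul_tmul, x.mul_inv, one_mul,
        ← Algebra.TensorProduct.one_def]
    have hΦ'Φ : Φ' * Φ = 1 := by
      rw [hΦ, hΦ', mul_assoc, ← mul_assoc (((1:H) ⊗ₜ[k] ((x⁻¹ : (H ⊗[k] H)ˣ) : H ⊗[k] H))),
        Algebra.TensorProduct.tmul_mul_tmul, x.inv_mul, one_mul,
        ← Algebra.TensorProduct.one_def, one_mul, ← map_mul, x.inv_mul, map_one]
    have hAΨ : A Ψ = Φ := hcocycle.symm
    have hAΨ' : A Ψ' = Φ' := by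
      calc A Ψ' = (Φ' * Φ) * A Ψ' := by rw [hΦ'Φ, one_mul]
        _ = Φ' * (A Ψ * A Ψ') := by rw [hAΨ, mul_assoc]
        _ = Φ' * A (Ψ * Ψ') := by rw [← map_mul]
        _ = Φ' := by rw [hΨΨ', map_one, mul_one]
    -- F = map f id is conjugate of G by x ⊗ 1
    have hF : ∀ y : H ⊗[k] H,
        Algebra.TensorProduct.map f (AlgHom.id k H) y
          = ((x : H ⊗[k] H) ⊗ₜ[k] (1 : H)) * G y
              * (((x⁻¹ : (H ⊗[k] H)ˣ) : H ⊗[k] H) ⊗ₜ[k] (1 : H)) := by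
      intro y
      induction y using TensorProduct.induction_on with
      | zero => simp
      | tmul a b =>
        simp only [Algebra.TensorProduct.map_tmul, AlgHom.coe_id, id_eq, hG,
          Algebra.TensorProduct.tmul_mul_tmul, one_mul, mul_one, hf,
          Bialgebra.comulAlgHom_apply]
      | add y z hy hz => simp [mul_add, add_mul, hy, hz]
    have hF' : ∀ y : H ⊗[k] H,
        Algebra.TensorProduct.map (AlgHom.id k H) f y
          = ((1 : H) ⊗ₜ[k] (x : H ⊗[k] H)) * G' y
              * ((1 : H) ⊗ₜ[k] ((x⁻¹ : (H ⊗[k] H)ˣ) : H ⊗[k] H)) := by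
      intro y
      induction y using TensorProduct.induction_on with
      | zero => simp
      | tmul a b =>
        simp only [Algebra.TensorProduct.map_tmul, AlgHom.coe_id, id_eq, hG',
          Algebra.TensorProduct.tmul_mul_tmul, one_mul, mul_one, hf,
          Bialgebra.comulAlgHom_apply]
      | add y z hy hz => simp [mul_add, add_mul, hy, hz]
    have e1 : (twistedComul k H x).rTensor H (twistedComul k H x h)
        = Ψ * G (Coalgebra.comul h) * Ψ' := by
      have h0 : (twistedComul k H x).rTensor H (twistedComul k H x h)
          = Algebra.TensorProduct.map f (AlgHom.id k H) (f h) := by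
        rw [← hftl]; exact rTensor_algHom k f _
      rw [h0, hF, hf, map_mul, map_mul]
      simp only [mul_assoc, hΨ, hΨ']
    have e2 : (twistedComul k H x).lTensor H (twistedComul k H x h)
        = Φ * G' (Coalgebra.comul h) * Φ' := by
      have h0 : (twistedComul k H x).lTensor H (twistedComul k H x h)
          = Algebra.TensorProduct.map (AlgHom.id k H) f (f h) := by
        rw [← hftl]; exact lTensor_algHom k f _
      rw [h0, hF', hf, map_mul, map_mul]
      simp only [mul_assoc, hΦ, hΦ']
    have e3 : A (G (Coalgebra.comul h)) = G' (Coalgebra.comul h) := by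
      have h1 : G (Coalgebra.comul h)
          = LinearMap.rTensor H (Coalgebra.comul (R := k) (A := H)) (Coalgebra.comul h) :=
        (rTensor_algHom k (Bialgebra.comulAlgHom k H) _).symm
      have h2 : G' (Coalgebra.comul h)
          = LinearMap.lTensor H (Coalgebra.comul (R := k) (A := H)) (Coalgebra.comul h) :=
        (lTensor_algHom k (Bialgebra.comulAlgHom k H) _).symm
      rw [h1, h2, hA]
      exact LinearMap.congr_fun (Coalgebra.coassoc (R := k) (A := H)) h
    rw [e1, e2, ← hA, map_mul, map_mul, hAΨ, hAΨ', e3]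
  · -- left counit
    apply LinearMap.ext; intro h
    simp only [LinearMap.comp_apply]
    set E := Algebra.TensorProduct.map (Bialgebra.counitAlgHom k H) (AlgHom.id k H) with hEdef
    have hrc : ∀ y : H ⊗[k] H,
        LinearMap.rTensor H (Coalgebra.counit (R := k) (A := H)) y = E y := fun y =>
      rTensor_algHom k (Bialgebra.counitAlgHom k H) y
    have hEx : E ↑x = 1 := by
      rw [← hrc]
      apply (TensorProduct.lid k H).injective
      have h1 : (TensorProduct.lid k H)
          ((LinearMap.rTensor H (Coalgebra.counit (R := k) (A := H))) ↑x) = 1 := hnorm₁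
      rw [h1]
      simp [Algebra.TensorProduct.one_def]
    have hEx' : E ((x⁻¹ : (H ⊗[k] H)ˣ) : H ⊗[k] H) = 1 := by
      have h1 := congrArg E hXX'
      rwa [map_mul, hEx, one_mul, map_one] at h1
    rw [twistedComul_apply, hrc, map_mul, map_mul, hEx, hEx', one_mul, mul_one, ← hrc]
    exact LinearMap.congr_fun (Coalgebra.rTensor_counit_comp_comul (R := k) (A := H)) h
  · -- right counit
    apply LinearMap.ext; intro h
    simp only [LinearMap.comp_apply]
    set E := Algebra.TensorProduct.map (AlgHom.id k H) (Bialgebra.counitAlgHom k H) with hEdef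
    have hlc : ∀ y : H ⊗[k] H,
        LinearMap.lTensor H (Coalgebra.counit (R := k) (A := H)) y = E y := fun y =>
      lTensor_algHom k (Bialgebra.counitAlgHom k H) y
    have hEx : E ↑x = 1 := by
      rw [← hlc]
      apply (TensorProduct.rid k H).injective
      have h1 : (TensorProduct.rid k H)
          ((LinearMap.lTensor H (Coalgebra.counit (R := k) (A := H))) ↑x) = 1 := hnorm₂
      rw [h1]
      simp [Algebra.TensorProduct.one_def]
    have hEx' : E ((x⁻¹ : (H ⊗[k] H)ˣ) : H ⊗[k] H) = 1 := by
      have h1 := congrArg E hXX'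
      rwa [map_mul, hEx, one_mul, map_one] at h1
    rw [twistedComul_apply, hlc, map_mul, map_mul, hEx, hEx', one_mul, mul_one, ← hlc]
    exact LinearMap.congr_fun (Coalgebra.lTensor_counit_comp_comul (R := k) (A := H)) h

end
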